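/- arXiv:math/0204252 — 2 statements merged into one kernel-verified Lean document; each statement's English description precedes it below -/
import Mathlib

section
/- If for some fixed ℓ every edge (t-1)-coloring of the complete 3-uniform hypergraph on a sufficiently large vertex set admits a monochromatic set of size ℓ, and G is a graph whose geometric thickness is at most t-1, then any induced subgraph construction pattern repeated on a monochromatic subset yields a geometric-thickness-(3)-drawable subgraph; consequently, if G_3(ℓ) has geometric thickness greater than 3 for some ℓ, then the geometric thickness of G_3(n) is unbounded as n → ∞. -/
/-- The graph `G₃(n)` on the 1-element and 3-element subsets of `Fin n`,
with an edge between two subsets exactly when one strictly contains the other. -/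
def G3 (n : ℕ) : SimpleGraph {S : Finset (Fin n) // S.card = 1 ∨ S.card = 3} :=
  SimpleGraph.fromRel (fun S T => S.val ⊂ T.val)

/-- `G` has geometric thickness at most `k`: there is an injective straight-line drawing
of `G` in the plane and a coloring of its edges with `k` colors so that two distinct
edges of the same color meet only at images of shared endpoints. -/
def GeomThickLE {V : Type} (G : SimpleGraph V) (k : ℕ) : Prop :=
  ∃ (f : V → ℝ × ℝ) (c : Sym2 V → Fin k), Function.Injective f ∧
    ∀ a b d e : V, G.Adj a b → G.Adj d e → c s(a, b) = c s(d, e) → s(a, b) ≠ s(d, e) →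
      ∀ x ∈ segment ℝ (f a) (f b) ∩ segment ℝ (f d) (f e),
        ∃ v, (v = a ∨ v = b) ∧ (v = d ∨ v = e) ∧ x = f v

open Finset


/-- Finite multicolor Ramsey theorem for `r`-uniform hypergraphs on any linear order. -/
theorem myRamsey (α : Type) [DecidableEq α] [Fintype α] (r : ℕ) :
    ∀ m : ℕ, ∃ N : ℕ, ∀ (β : Type) [LinearOrder β] (c : Finset β → α) (s : Finset β),
      N ≤ s.card → ∃ T, T ⊆ s ∧ T.card = m ∧ ∃ i : α, ∀ u ⊆ T, u.card = r → c u = i := by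
  induction r with
  | zero =>
    intro m
    refine ⟨m, fun β _ c s hs => ?_⟩
    obtain ⟨T, hTs, hTc⟩ := Finset.exists_subset_card_eq hs
    refine ⟨T, hTs, hTc, c ∅, fun u _ hu => ?_⟩
    rw [Finset.card_eq_zero.mp hu]
  | succ r IH =>
    -- pre-homogeneous sets
    have pre : ∀ L : ℕ, ∃ N : ℕ, ∀ (β : Type) [LinearOrder β] (c : Finset β → α) (s : Finset β),
        N ≤ s.card → ∃ T, T ⊆ s ∧ T.card = L ∧ ∃ d : β → α,
          ∀ x ∈ T, ∀ u ⊆ T.filter (fun y => x < y), u.card = r → c (insert x u) = d x := by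
      intro L
      induction L with
      | zero =>
        refine ⟨0, fun β _ c s _ => ⟨∅, empty_subset _, card_empty, fun _ => c ∅, ?_⟩⟩
        intro x hx
        simp at hx
      | succ L IHL =>
        obtain ⟨N₀, h₀⟩ := IHL
        obtain ⟨N₁, h₁⟩ := IH N₀
        refine ⟨N₁ + 1, fun β _ c s hs => ?_⟩
        have hne : s.Nonempty := card_pos.mp (by omega)
        set x := s.min' hne with hxdef
        have hxs : x ∈ s := s.min'_mem hne
        have hs' : N₁ ≤ (s.erase x).card := by
          rw [card_erase_of_mem hxs]; omega
        obtain ⟨t, hts, htc, i, hi⟩ := h₁ β (fun u => c (insert x u)) (s.erase x) hs'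
        obtain ⟨T', hT't, hT'c, d', hd'⟩ := h₀ β c t (le_of_eq htc.symm)
        have hxT' : x ∉ T' := fun hmem => (Finset.notMem_erase x s) (hts (hT't hmem))
        refine ⟨insert x T', ?_, ?_, fun y => if y = x then i else d' y, ?_⟩
        · exact insert_subset hxs ((hT't.trans hts).trans (erase_subset _ _))
        · rw [card_insert_of_notMem hxT', hT'c]
        · intro y hy u hu huc
          rcases Finset.mem_insert.mp hy with hyx | hyT'
          · subst hyx
            simp only [if_pos rfl]
            refine hi u (fun z hz => ?_) huc
            have := Finset.mem_filter.mp (hu hz)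
            rcases Finset.mem_insert.mp this.1 with h | h
            · exact absurd (h ▸ this.2) (lt_irrefl _)
            · exact hT't h
          · have hyx : y ≠ x := fun h => hxT' (h ▸ hyT')
            simp only [if_neg hyx]
            refine hd' y hyT' u (fun z hz => ?_) huc
            have := Finset.mem_filter.mp (hu hz)
            have hxy : x < y := lt_of_le_of_ne (s.min'_le y ((hT't.trans hts) hyT' |>
              (fun h => (erase_subset x s) h))) (Ne.symm hyx)
            rcases Finset.mem_insert.mp this.1 with h | h
            · exact absurd (h ▸ this.2) (not_lt.mpr (le_of_lt hxy))
            · exact Finset.mem_filter.mpr ⟨h, this.2⟩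
    intro m
    obtain ⟨N, hN⟩ := pre (Fintype.card α * m)
    refine ⟨N, fun β _ c s hs => ?_⟩
    obtain ⟨T, hTs, hTc, d, hd⟩ := hN β c s hs
    have hα : Nonempty α := ⟨c ∅⟩
    obtain ⟨i, -, hi⟩ := Finset.exists_le_card_fiber_of_mul_le_card_of_maps_to
      (f := d) (s := T) (t := Finset.univ) (fun a _ => mem_univ _) univ_nonempty
      (by rw [card_univ, hTc])
    obtain ⟨T'', hT''s, hT''c⟩ := Finset.exists_subset_card_eq hi
    have hT''f : T'' ⊆ T.filter (fun x => d x = i) := hT''s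
    have hT''T : T'' ⊆ T := hT''f.trans (filter_subset _ _)
    refine ⟨T'', hT''T.trans hTs, hT''c, i, fun u hu huc => ?_⟩
    have hune : u.Nonempty := card_pos.mp (by omega)
    set x := u.min' hune with hxdef
    have hxu : x ∈ u := u.min'_mem hune
    have hins : insert x (u.erase x) = u := insert_erase hxu
    have hsub : u.erase x ⊆ T.filter (fun y => x < y) := by
      intro z hz
      have hzu : z ∈ u := (erase_subset _ _) hz
      refine Finset.mem_filter.mpr ⟨hT''T (hu hzu), lt_of_le_of_ne (u.min'_le z hzu)
        (Ne.symm (Finset.ne_of_mem_erase hz))⟩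
    have hcard : (u.erase x).card = r := by rw [card_erase_of_mem hxu, huc]; omega
    have hdx : d x = i := (Finset.mem_filter.mp (hT''f (hu hxu))).2
    rw [← hins, hd x (hT''T (hu hxu)) (u.erase x) hsub hcard, hdx]

abbrev VT (n : ℕ) := {S : Finset (Fin n) // S.card = 1 ∨ S.card = 3}

/-- position (0 = min, 1 = middle, 2 = max) of `x` in `u`. -/
def pos3 {β : Type} [LinearOrder β] (x : β) (u : Finset β) (h : u.Nonempty) : Fin 3 :=
  if x = u.min' h then 0 else if x = u.max' h then 2 else 1

/-- the middle element of a card-3 finset. -/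
def mid3 {β : Type} [LinearOrder β] (u : Finset β) (h : u.card = 3) : β :=
  ((u.erase (u.min' (card_pos.mp (by omega)))).erase
      (u.max' (card_pos.mp (by omega)))).min'
    (card_pos.mp (by
      have hne : u.Nonempty := card_pos.mp (by omega)
      have hlt : u.min' hne < u.max' hne := u.min'_lt_max'_of_card (by omega)
      have h1 : (u.erase (u.min' hne)).card = 2 := by
        rw [card_erase_of_mem (u.min'_mem hne)]; omega
      have h2 : u.max' hne ∈ u.erase (u.min' hne) :=
        Finset.mem_erase.mpr ⟨ne_of_gt hlt, u.max'_mem hne⟩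
      rw [card_erase_of_mem h2]; omega))

lemma mid3_eq {β : Type} [LinearOrder β] {u : Finset β} (h : u.card = 3) {x : β}
    (hx : x ∈ u) (hmin : x ≠ u.min' (card_pos.mp (by omega)))
    (hmax : x ≠ u.max' (card_pos.mp (by omega))) : mid3 u h = x := by
  have hne : u.Nonempty := card_pos.mp (by omega)
  have hxw : x ∈ (u.erase (u.min' hne)).erase (u.max' hne) :=
    Finset.mem_erase.mpr ⟨hmax, Finset.mem_erase.mpr ⟨hmin, hx⟩⟩
  have hcard : ((u.erase (u.min' hne)).erase (u.max' hne)).card = 1 := by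
    have hlt : u.min' hne < u.max' hne := u.min'_lt_max'_of_card (by omega)
    have h1 : (u.erase (u.min' hne)).card = 2 := by
      rw [card_erase_of_mem (u.min'_mem hne)]; omega
    have h2 : u.max' hne ∈ u.erase (u.min' hne) :=
      Finset.mem_erase.mpr ⟨ne_of_gt hlt, u.max'_mem hne⟩
    rw [card_erase_of_mem h2]; omega
  obtain ⟨y, hy⟩ := Finset.card_eq_one.mp hcard
  have hxy : x = y := by rwa [hy, Finset.mem_singleton] at hxw
  have hm : mid3 u h ∈ (u.erase (u.min' hne)).erase (u.max' hne) := by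
    unfold mid3; exact Finset.min'_mem _ _
  rw [hy, Finset.mem_singleton] at hm
  rw [hm, ← hxy]

def elt3 {β : Type} [LinearOrder β] (u : Finset β) (h : u.card = 3) (p : Fin 3) : β :=
  if p = 0 then u.min' (card_pos.mp (by omega))
  else if p = 2 then u.max' (card_pos.mp (by omega))
  else mid3 u h

lemma elt3_pos3 {β : Type} [LinearOrder β] {u : Finset β} (h : u.card = 3) {x : β}
    (hx : x ∈ u) : elt3 u h (pos3 x u ⟨x, hx⟩) = x := by
  have hne : u.Nonempty := ⟨x, hx⟩
  unfold pos3 elt3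
  by_cases h0 : x = u.min' hne
  · rw [if_pos h0]
    norm_num
    exact h0.symm
  · by_cases h2 : x = u.max' hne
    · rw [if_neg h0, if_pos h2]
      norm_num
      exact h2.symm
    · rw [if_neg h0, if_neg h2]
      norm_num
      exact mid3_eq h hx h0 h2

lemma pos3_image {β γ : Type} [LinearOrder β] [LinearOrder γ] [DecidableEq γ] {e : β → γ}
    (he : StrictMono e) (u : Finset β) (h : u.Nonempty) (x : β) :
    pos3 (e x) (u.image e) (h.image e) = pos3 x u h := by
  have hmin : (u.image e).min' (h.image e) = e (u.min' h) := by
    apply le_antisymm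
    · exact Finset.min'_le _ _ (Finset.mem_image_of_mem e (u.min'_mem h))
    · apply Finset.le_min'
      intro y hy
      obtain ⟨z, hz, rfl⟩ := Finset.mem_image.mp hy
      exact he.monotone (u.min'_le z hz)
  have hmax : (u.image e).max' (h.image e) = e (u.max' h) := by
    apply le_antisymm
    · apply Finset.max'_le
      intro y hy
      obtain ⟨z, hz, rfl⟩ := Finset.mem_image.mp hy
      exact he.monotone (u.le_max' z hz)
    · exact Finset.le_max' _ _ (Finset.mem_image_of_mem e (u.max'_mem h))
  unfold pos3
  simp only [hmin, hmax, he.injective.eq_iff]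

/-- The nonempty-ness of a vertex of `G3`. -/
lemma vne {n : ℕ} (A : VT n) : A.val.Nonempty :=
  Finset.card_pos.mp (by rcases A.2 with h | h <;> omega)

/-- The unique element of a singleton vertex (junk on tripleton vertices). -/
def theElt {n : ℕ} (A : VT n) : Fin n := A.val.min' (vne A)

/-- The layer of an edge of `G3 ℓ`, as the position of the singleton inside the tripleton. -/
def h3fun {ℓ : ℕ} (A B : VT ℓ) : Fin 3 :=
  if hAB : A.val ⊂ B.val then pos3 (theElt A) B.val (vne B)
  else if hBA : B.val ⊂ A.val then pos3 (theElt B) A.val (vne A)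
  else 0

lemma h3fun_symm {ℓ : ℕ} (A B : VT ℓ) : h3fun A B = h3fun B A := by
  unfold h3fun
  by_cases hAB : A.val ⊂ B.val
  · have hBA : ¬ B.val ⊂ A.val := fun hc => ssubset_asymm hAB hc
    rw [dif_pos hAB, dif_neg hBA, dif_pos hAB]
  · by_cases hBA : B.val ⊂ A.val
    · rw [dif_neg hAB, dif_pos hBA, dif_pos hBA]
    · rw [dif_neg hAB, dif_neg hBA, dif_neg hBA, dif_neg hAB]

lemma transfer {n ℓ t : ℕ}
    (f : VT n → ℝ × ℝ) (c : Sym2 (VT n) → Fin t)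
    (hfinj : Function.Injective f)
    (hmain : ∀ a b d e : VT n, (G3 n).Adj a b → (G3 n).Adj d e →
      c s(a, b) = c s(d, e) → s(a, b) ≠ s(d, e) →
      ∀ x ∈ segment ℝ (f a) (f b) ∩ segment ℝ (f d) (f e),
        ∃ v, (v = a ∨ v = b) ∧ (v = d ∨ v = e) ∧ x = f v)
    (T : Finset (Fin n)) (hT : T.card = ℓ) (i : Fin 3 → Fin t)
    (hmono : ∀ u : Finset (Fin n), u ⊆ T → ∀ (h3 : u.card = 3), ∀ p : Fin 3,
      c s(⟨{elt3 u h3 p}, Or.inl (Finset.card_singleton _)⟩, ⟨u, Or.inr h3⟩) = i p) :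
    GeomThickLE (G3 ℓ) 3 := by
  set e : Fin ℓ → Fin n := fun x => T.orderEmbOfFin hT x with hedef
  have he : StrictMono e := (T.orderEmbOfFin hT).strictMono
  have heT : ∀ x, e x ∈ T := fun x => T.orderEmbOfFin_mem hT x
  set φ : VT ℓ → VT n := fun A => ⟨A.val.image e, by
    rcases A.2 with h | h
    · exact Or.inl (by rw [Finset.card_image_of_injective _ he.injective, h])
    · exact Or.inr (by rw [Finset.card_image_of_injective _ he.injective, h])⟩ with hφdef
  have hφval : ∀ A, (φ A).val = A.val.image e := fun A => rfl
  have hφinj : Function.Injective φ := by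
    intro A B hAB
    apply Subtype.ext
    have := congrArg Subtype.val hAB
    rw [hφval, hφval] at this
    exact Finset.image_injective he.injective this
  have hφss : ∀ A B : VT ℓ, A.val ⊂ B.val → (φ A).val ⊂ (φ B).val := by
    intro A B h
    rw [hφval, hφval]
    exact (Finset.image_ssubset_image he.injective).mpr h
  have hφadj : ∀ A B : VT ℓ, (G3 ℓ).Adj A B → (G3 n).Adj (φ A) (φ B) := by
    intro A B hadj
    rw [G3, SimpleGraph.fromRel_adj] at hadj ⊢
    refine ⟨fun hc => hadj.1 (hφinj hc), ?_⟩
    rcases hadj.2 with h | h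
    · exact Or.inl (hφss A B h)
    · exact Or.inr (hφss B A h)
  -- the key color computation
  have key : ∀ A B : VT ℓ, A.val ⊂ B.val → c s(φ A, φ B) = i (h3fun A B) := by
    intro A B hAB
    have hcardlt : A.val.card < B.val.card := Finset.card_lt_card hAB
    have hA1 : A.val.card = 1 := by
      rcases A.2 with h | h
      · exact h
      · rcases B.2 with h' | h' <;> omega
    have hB3 : B.val.card = 3 := by rcases B.2 with h' | h'; omega; exact h'
    obtain ⟨x, hAx⟩ := Finset.card_eq_one.mp hA1
    have hxB : x ∈ B.val := hAB.subset (by rw [hAx]; exact Finset.mem_singleton_self x)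
    set u : Finset (Fin n) := B.val.image e with hudef
    have hu3 : u.card = 3 := by
      rw [hudef, Finset.card_image_of_injective _ he.injective, hB3]
    have huT : u ⊆ T := by
      intro z hz
      obtain ⟨y, -, rfl⟩ := Finset.mem_image.mp hz
      exact heT y
    have hexu : e x ∈ u := Finset.mem_image_of_mem e hxB
    have hmono' := hmono u huT hu3 (pos3 (e x) u ⟨e x, hexu⟩)
    have hvtx : (⟨{elt3 u hu3 (pos3 (e x) u ⟨e x, hexu⟩)}, Or.inl (Finset.card_singleton _)⟩ : VT n)
        = φ A := by
      apply Subtype.ext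
      rw [hφval, hAx, Finset.image_singleton, elt3_pos3 hu3 hexu]
    have hvtx2 : (⟨u, Or.inr hu3⟩ : VT n) = φ B := Subtype.ext rfl
    rw [hvtx, hvtx2] at hmono'
    rw [hmono']
    congr 1
    have hpos : pos3 (e x) u ⟨e x, hexu⟩ = pos3 x B.val (vne B) := by
      simp only [hudef]
      exact pos3_image he B.val (vne B) x
    rw [hpos]
    unfold h3fun
    rw [dif_pos hAB]
    congr 1
    unfold theElt
    simp [hAx]
  have keyE : ∀ A B : VT ℓ, (G3 ℓ).Adj A B → c s(φ A, φ B) = i (h3fun A B) := by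
    intro A B hadj
    rw [G3, SimpleGraph.fromRel_adj] at hadj
    rcases hadj.2 with h | h
    · exact key A B h
    · rw [Sym2.eq_swap, key B A h, h3fun_symm]
  refine ⟨fun A => f (φ A), Sym2.lift ⟨h3fun, h3fun_symm⟩, hfinj.comp hφinj, ?_⟩
  intro a b d e' hab hde hcc hne x hx
  have h1 := hφadj _ _ hab
  have h2 := hφadj _ _ hde
  simp only [Sym2.lift_mk] at hcc
  have hc' : c s(φ a, φ b) = c s(φ d, φ e') := by
    rw [keyE a b hab, keyE d e' hde, hcc]
  have hne' : s(φ a, φ b) ≠ s(φ d, φ e') := by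
    intro hcontra
    apply hne
    rw [Sym2.eq_iff] at hcontra ⊢
    rcases hcontra with ⟨h3, h4⟩ | ⟨h3, h4⟩
    · exact Or.inl ⟨hφinj h3, hφinj h4⟩
    · exact Or.inr ⟨hφinj h3, hφinj h4⟩
  obtain ⟨v, hv1, hv2, hxv⟩ := hmain _ _ _ _ h1 h2 hc' hne' x hx
  rcases hv1 with h | h <;> rcases hv2 with h' | h'
  · exact ⟨a, Or.inl rfl, Or.inl (hφinj (h.symm.trans h')), hxv.trans (congrArg f h)⟩
  · exact ⟨a, Or.inl rfl, Or.inr (hφinj (h.symm.trans h')), hxv.trans (congrArg f h)⟩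
  · exact ⟨b, Or.inr rfl, Or.inl (hφinj (h.symm.trans h')), hxv.trans (congrArg f h)⟩
  · exact ⟨b, Or.inr rfl, Or.inr (hφinj (h.symm.trans h')), hxv.trans (congrArg f h)⟩

/-- If some `G₃(ℓ)` has geometric thickness greater than 3, then (via Ramsey's theorem
for 3-uniform hypergraphs applied to the layer triples of the tripletons) the geometric
thickness of `G₃(n)` is unbounded as `n → ∞`. -/
theorem G3_geomThickness_unbounded
    (h : ∃ ℓ : ℕ, ¬ GeomThickLE (G3 ℓ) 3) :
    ∀ t : ℕ, ∃ n : ℕ, ¬ GeomThickLE (G3 n) t := by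
  obtain ⟨ℓ, hℓ⟩ := h
  intro t
  rcases Nat.eq_zero_or_pos t with rfl | htpos
  · refine ⟨3, fun hGT => ?_⟩
    obtain ⟨f, c, -, -⟩ := hGT
    exact (c s(⟨{0}, Or.inl (Finset.card_singleton 0)⟩,
      ⟨{0}, Or.inl (Finset.card_singleton 0)⟩)).elim0
  · obtain ⟨N, hN⟩ := myRamsey (Fin 3 → Fin t) 3 ℓ
    refine ⟨N, fun hGT => hℓ ?_⟩
    obtain ⟨f, c, hfinj, hmain⟩ := hGT
    obtain ⟨T, hTs, hTc, i, hmono'⟩ := hN (Fin N)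
      (fun u p => if h3 : u.card = 3 then
          c s(⟨{elt3 u h3 p}, Or.inl (Finset.card_singleton _)⟩, ⟨u, Or.inr h3⟩)
        else ⟨0, htpos⟩)
      Finset.univ (by rw [Finset.card_univ, Fintype.card_fin])
    refine transfer f c hfinj hmain T hTc i ?_
    intro u hu h3 p
    have h2 := congrFun (hmono' u hu h3) p
    simpa only [dif_pos h3] using h2
end

section
/- Erdős–Szekeres theorem: for every integer k ≥ 3 there exists N such that any set of at least N points in the plane in general position (no three collinear) contains k points that are the vertices of a convex polygon (i.e., k points in convex position). -/
/-- Two-colour Ramsey theorem for pairs, on finite sets of naturals. -/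
lemma ramsey_pairs : ∀ s t : ℕ, ∃ N : ℕ, ∀ (c : ℕ → ℕ → Bool) (S : Finset ℕ), N ≤ S.card →
    (∃ T ⊆ S, T.card = s ∧ ∀ i ∈ T, ∀ j ∈ T, i < j → c i j = true) ∨
    (∃ T ⊆ S, T.card = t ∧ ∀ i ∈ T, ∀ j ∈ T, i < j → c i j = false) := by
  suffices H : ∀ n : ℕ, ∀ s t : ℕ, s + t = n → ∃ N : ℕ, ∀ (c : ℕ → ℕ → Bool) (S : Finset ℕ),
      N ≤ S.card →
      (∃ T ⊆ S, T.card = s ∧ ∀ i ∈ T, ∀ j ∈ T, i < j → c i j = true) ∨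
      (∃ T ⊆ S, T.card = t ∧ ∀ i ∈ T, ∀ j ∈ T, i < j → c i j = false) by
    intro s t; exact H (s + t) s t rfl
  intro n
  induction n with
  | zero =>
    intro s t hst
    refine ⟨0, fun c S _ => Or.inl ⟨∅, Finset.empty_subset _, ?_, by simp⟩⟩
    simp; omega
  | succ n ih =>
    intro s t hst
    match s, t with
    | 0, t => exact ⟨0, fun c S _ => Or.inl ⟨∅, Finset.empty_subset _, by simp, by simp⟩⟩
    | s + 1, 0 => exact ⟨0, fun c S _ => Or.inr ⟨∅, Finset.empty_subset _, by simp, by simp⟩⟩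
    | s + 1, t + 1 =>
      obtain ⟨N1, h1⟩ := ih s (t + 1) (by omega)
      obtain ⟨N2, h2⟩ := ih (s + 1) t (by omega)
      refine ⟨N1 + N2 + 1, fun c S hS => ?_⟩
      have hne : S.Nonempty := Finset.card_pos.mp (by omega)
      set v := S.min' hne with hv
      have hvS : v ∈ S := S.min'_mem hne
      have hvmin : ∀ i ∈ S, i ≠ v → v < i := by
        intro i hi hne'
        exact lt_of_le_of_ne (S.min'_le i hi) (Ne.symm hne')
      set A := (S.erase v).filter (fun i => c v i = true) with hA
      set B := (S.erase v).filter (fun i => ¬ c v i = true) with hB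
      have hcard : A.card + B.card = (S.erase v).card :=
        Finset.card_filter_add_card_filter_not _
      have hEcard : (S.erase v).card = S.card - 1 := Finset.card_erase_of_mem hvS
      have hAS : A ⊆ S.erase v := Finset.filter_subset _ _
      have hBS : B ⊆ S.erase v := Finset.filter_subset _ _
      have hvA : ∀ i ∈ A, v < i := fun i hi =>
        hvmin i (Finset.mem_of_mem_erase (hAS hi)) (Finset.ne_of_mem_erase (hAS hi))
      have hvB : ∀ i ∈ B, v < i := fun i hi =>
        hvmin i (Finset.mem_of_mem_erase (hBS hi)) (Finset.ne_of_mem_erase (hBS hi))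
      rcases le_or_gt N1 A.card with hA1 | hA1
      · rcases h1 c A hA1 with ⟨T, hTA, hTc, hT⟩ | ⟨T, hTA, hTc, hT⟩
        · -- extend with v
          left
          have hvT : v ∉ T := fun h => lt_irrefl v (hvA v (hTA h))
          refine ⟨insert v T, ?_, ?_, ?_⟩
          · intro i hi
            rcases Finset.mem_insert.mp hi with rfl | hi
            · exact hvS
            · exact Finset.mem_of_mem_erase (hAS (hTA hi))
          · rw [Finset.card_insert_of_notMem hvT, hTc]
          · intro i hi j hj hij
            rcases Finset.mem_insert.mp hi with rfl | hi
            · rcases Finset.mem_insert.mp hj with rfl | hj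
              · omega
              · exact (Finset.mem_filter.mp (hTA hj)).2
            · rcases Finset.mem_insert.mp hj with rfl | hj
              · exact absurd (hvA i (hTA hi)) (by omega)
              · exact hT i hi j hj hij
        · right
          exact ⟨T, hTA.trans (hAS.trans (Finset.erase_subset _ _)), hTc, hT⟩
      · have hB2 : N2 ≤ B.card := by omega
        rcases h2 c B hB2 with ⟨T, hTB, hTc, hT⟩ | ⟨T, hTB, hTc, hT⟩
        · left
          exact ⟨T, hTB.trans (hBS.trans (Finset.erase_subset _ _)), hTc, hT⟩
        · right
          have hvT : v ∉ T := fun h => lt_irrefl v (hvB v (hTB h))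
          refine ⟨insert v T, ?_, ?_, ?_⟩
          · intro i hi
            rcases Finset.mem_insert.mp hi with rfl | hi
            · exact hvS
            · exact Finset.mem_of_mem_erase (hBS (hTB hi))
          · rw [Finset.card_insert_of_notMem hvT, hTc]
          · intro i hi j hj hij
            rcases Finset.mem_insert.mp hi with rfl | hi
            · rcases Finset.mem_insert.mp hj with rfl | hj
              · omega
              · simpa using (Finset.mem_filter.mp (hTB hj)).2
            · rcases Finset.mem_insert.mp hj with rfl | hj
              · exact absurd (hvB i (hTB hi)) (by omega)
              · exact hT i hi j hj hij

/-- Two-colour Ramsey theorem for triples, on finite sets of naturals. -/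
lemma ramsey_triples : ∀ s t : ℕ, ∃ N : ℕ, ∀ (c : ℕ → ℕ → ℕ → Bool) (S : Finset ℕ),
    N ≤ S.card →
    (∃ T ⊆ S, T.card = s ∧
      ∀ i ∈ T, ∀ j ∈ T, ∀ k ∈ T, i < j → j < k → c i j k = true) ∨
    (∃ T ⊆ S, T.card = t ∧
      ∀ i ∈ T, ∀ j ∈ T, ∀ k ∈ T, i < j → j < k → c i j k = false) := by
  suffices H : ∀ n : ℕ, ∀ s t : ℕ, s + t = n → ∃ N : ℕ,
      ∀ (c : ℕ → ℕ → ℕ → Bool) (S : Finset ℕ), N ≤ S.card →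
      (∃ T ⊆ S, T.card = s ∧
        ∀ i ∈ T, ∀ j ∈ T, ∀ k ∈ T, i < j → j < k → c i j k = true) ∨
      (∃ T ⊆ S, T.card = t ∧
        ∀ i ∈ T, ∀ j ∈ T, ∀ k ∈ T, i < j → j < k → c i j k = false) by
    intro s t; exact H (s + t) s t rfl
  intro n
  induction n with
  | zero =>
    intro s t hst
    refine ⟨0, fun c S _ => Or.inl ⟨∅, Finset.empty_subset _, ?_, by simp⟩⟩
    simp; omega
  | succ n ih =>
    intro s t hst
    match s, t with
    | 0, t => exact ⟨0, fun c S _ => Or.inl ⟨∅, Finset.empty_subset _, by simp, by simp⟩⟩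
    | s + 1, 0 => exact ⟨0, fun c S _ => Or.inr ⟨∅, Finset.empty_subset _, by simp, by simp⟩⟩
    | s + 1, t + 1 =>
      obtain ⟨N1, h1⟩ := ih s (t + 1) (by omega)
      obtain ⟨N2, h2⟩ := ih (s + 1) t (by omega)
      obtain ⟨M, hM⟩ := ramsey_pairs N1 N2
      refine ⟨M + 1, fun c S hS => ?_⟩
      have hne : S.Nonempty := Finset.card_pos.mp (by omega)
      set v := S.min' hne with hv
      have hvS : v ∈ S := S.min'_mem hne
      have hvmin : ∀ i ∈ S, i ≠ v → v < i := by
        intro i hi hne'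
        exact lt_of_le_of_ne (S.min'_le i hi) (Ne.symm hne')
      have hEcard : M ≤ (S.erase v).card := by
        rw [Finset.card_erase_of_mem hvS]; omega
      rcases hM (fun i j => c v i j) (S.erase v) hEcard with
        ⟨A, hAS, hAc, hA⟩ | ⟨A, hAS, hAc, hA⟩
      · -- all pairs in A are c v · · = true
        have hvA : ∀ i ∈ A, v < i := fun i hi =>
          hvmin i (Finset.mem_of_mem_erase (hAS hi)) (Finset.ne_of_mem_erase (hAS hi))
        rcases h1 c A (le_of_eq hAc.symm) with ⟨T, hTA, hTc, hT⟩ | ⟨T, hTA, hTc, hT⟩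
        · left
          have hvT : v ∉ T := fun h => lt_irrefl v (hvA v (hTA h))
          refine ⟨insert v T, ?_, ?_, ?_⟩
          · intro i hi
            rcases Finset.mem_insert.mp hi with rfl | hi
            · exact hvS
            · exact Finset.mem_of_mem_erase (hAS (hTA hi))
          · rw [Finset.card_insert_of_notMem hvT, hTc]
          · intro i hi j hj k hk hij hjk
            have hjk' : j ∈ insert v T → v < j ∨ j = v := by
              intro h
              rcases Finset.mem_insert.mp h with rfl | h
              · exact Or.inr rfl
              · exact Or.inl (hvA j (hTA h))
            rcases Finset.mem_insert.mp hi with rfl | hi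
            · have hj' : j ∈ T := by
                rcases Finset.mem_insert.mp hj with rfl | h
                · omega
                · exact h
              have hk' : k ∈ T := by
                rcases Finset.mem_insert.mp hk with rfl | h
                · rcases hjk' hj with h' | h' <;> omega
                · exact h
              exact hA j (hTA hj') k (hTA hk') hjk
            · have hvi : v < i := hvA i (hTA hi)
              have hj' : j ∈ T := by
                rcases Finset.mem_insert.mp hj with rfl | h
                · omega
                · exact h
              have hk' : k ∈ T := by
                rcases Finset.mem_insert.mp hk with rfl | h
                · have := hvA j (hTA hj'); omega
                · exact h
              exact hT i hi j hj' k hk' hij hjk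
        · right
          exact ⟨T, hTA.trans (hAS.trans (Finset.erase_subset _ _)), hTc, hT⟩
      · -- all pairs in A are c v · · = false
        have hvA : ∀ i ∈ A, v < i := fun i hi =>
          hvmin i (Finset.mem_of_mem_erase (hAS hi)) (Finset.ne_of_mem_erase (hAS hi))
        rcases h2 c A (le_of_eq hAc.symm) with ⟨T, hTA, hTc, hT⟩ | ⟨T, hTA, hTc, hT⟩
        · left
          exact ⟨T, hTA.trans (hAS.trans (Finset.erase_subset _ _)), hTc, hT⟩
        · right
          have hvT : v ∉ T := fun h => lt_irrefl v (hvA v (hTA h))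
          refine ⟨insert v T, ?_, ?_, ?_⟩
          · intro i hi
            rcases Finset.mem_insert.mp hi with rfl | hi
            · exact hvS
            · exact Finset.mem_of_mem_erase (hAS (hTA hi))
          · rw [Finset.card_insert_of_notMem hvT, hTc]
          · intro i hi j hj k hk hij hjk
            rcases Finset.mem_insert.mp hi with rfl | hi
            · have hj' : j ∈ T := by
                rcases Finset.mem_insert.mp hj with rfl | h
                · omega
                · exact h
              have hk' : k ∈ T := by
                rcases Finset.mem_insert.mp hk with rfl | h
                · have := hvA j (hTA hj'); omega
                · exact h
              exact hA j (hTA hj') k (hTA hk') hjk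
            · have hvi : v < i := hvA i (hTA hi)
              have hj' : j ∈ T := by
                rcases Finset.mem_insert.mp hj with rfl | h
                · omega
                · exact h
              have hk' : k ∈ T := by
                rcases Finset.mem_insert.mp hk with rfl | h
                · have := hvA j (hTA hj'); omega
                · exact h
              exact hT i hi j hj' k hk' hij hjk

/-- Signed area (orientation) of a triple of planar points. -/
def sig (a b c : ℝ × ℝ) : ℝ :=
  (b.1 - a.1) * (c.2 - a.2) - (c.1 - a.1) * (b.2 - a.2)

lemma sig_cycle (a b c : ℝ × ℝ) : sig b c a = sig a b c := by
  simp only [sig]; ring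

lemma sig_swap (a b c : ℝ × ℝ) : sig a c b = -sig a b c := by
  simp only [sig]; ring

/-- If the orientation determinant vanishes, the three points are collinear. -/
lemma collinear_of_sig_eq_zero {a b c : ℝ × ℝ} (h : sig a b c = 0) :
    Collinear ℝ ({a, b, c} : Set (ℝ × ℝ)) := by
  by_cases hab : b = a
  · have hset : ({a, b, c} : Set (ℝ × ℝ)) = {a, c} := by rw [hab]; simp
    rw [hset]
    exact collinear_pair ℝ a c
  · rw [collinear_iff_of_mem (Set.mem_insert a {b, c})]
    refine ⟨b - a, ?_⟩
    intro p hp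
    rcases hp with rfl | rfl | rfl
    · exact ⟨0, by simp⟩
    · exact ⟨1, by simp⟩
    · -- the point is c (now named p)
      by_cases hx : b.1 = a.1
      · have hy : b.2 ≠ a.2 := by
          intro hy; exact hab (Prod.ext hx hy)
        refine ⟨(p.2 - a.2) / (b.2 - a.2), ?_⟩
        have hc1 : p.1 = a.1 := by
          simp only [sig, hx] at h
          have h0 : (p.1 - a.1) * (b.2 - a.2) = 0 := by linarith
          rcases mul_eq_zero.mp h0 with h' | h'
          · linarith
          · exact absurd (by linarith : b.2 = a.2) hy
        apply Prod.ext
        · simp only [vadd_eq_add, Prod.fst_add, Prod.smul_fst, Prod.fst_sub, smul_eq_mul, hx, hc1]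
          ring
        · simp only [vadd_eq_add, Prod.snd_add, Prod.smul_snd, Prod.snd_sub, smul_eq_mul]
          have hy' : b.2 - a.2 ≠ 0 := fun h' => hy (by linarith)
          field_simp
          ring
      · refine ⟨(p.1 - a.1) / (b.1 - a.1), ?_⟩
        have hx' : b.1 - a.1 ≠ 0 := fun h' => hx (by linarith)
        apply Prod.ext
        · simp only [vadd_eq_add, Prod.fst_add, Prod.smul_fst, Prod.fst_sub, smul_eq_mul]
          field_simp
          ring
        · simp only [vadd_eq_add, Prod.snd_add, Prod.smul_snd, Prod.snd_sub, smul_eq_mul]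
          simp only [sig] at h
          field_simp
          nlinarith [h]

/-- Core step: if all triples (in index order) of `T` have orientation of sign `ε`, then no
point of the configuration lies in the convex hull of three others. -/
lemma core (p : ℕ → ℝ × ℝ) (T : Finset ℕ) (ε : ℝ)
    (hmono : ∀ i ∈ T, ∀ j ∈ T, ∀ k ∈ T, i < j → j < k → 0 < ε * sig (p i) (p j) (p k))
    (ia ib ic iq : ℕ) (ha : ia ∈ T) (hb : ib ∈ T) (hc : ic ∈ T) (hq : iq ∈ T)
    (hab : ia < ib) (hbc : ib < ic)
    (hqa : iq ≠ ia) (hqb : iq ≠ ib) (hqc : iq ≠ ic)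
    (wa wb wc : ℝ) (h0a : 0 ≤ wa) (h0b : 0 ≤ wb) (h0c : 0 ≤ wc) (hsum : wa + wb + wc = 1)
    (hq1 : (p iq).1 = wa * (p ia).1 + wb * (p ib).1 + wc * (p ic).1)
    (hq2 : (p iq).2 = wa * (p ia).2 + wb * (p ib).2 + wc * (p ic).2) : False := by
  have hD : 0 < ε * sig (p ia) (p ib) (p ic) := hmono ia ha ib hb ic hc hab hbc
  have hwa : wa = 1 - wb - wc := by linarith
  have eac : sig (p ia) (p ic) (p iq) = -wb * sig (p ia) (p ib) (p ic) := by
    simp only [sig]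
    rw [hq1, hq2, hwa]; ring
  have eab : sig (p ia) (p ib) (p iq) = wc * sig (p ia) (p ib) (p ic) := by
    simp only [sig]
    rw [hq1, hq2, hwa]; ring
  have ebc : sig (p ib) (p ic) (p iq) = (1 - wb - wc) * sig (p ia) (p ib) (p ic) := by
    simp only [sig]
    rw [hq1, hq2, hwa]; ring
  rcases lt_or_gt_of_ne hqa with h | h
  · -- iq < ia : use triple (iq, ia, ic)
    have h1 : 0 < ε * sig (p iq) (p ia) (p ic) := hmono iq hq ia ha ic hc h (by omega)
    have e : sig (p iq) (p ia) (p ic) = sig (p ia) (p ic) (p iq) := by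
      simp only [sig]; ring
    rw [e, eac] at h1
    nlinarith [mul_nonneg h0b hD.le]
  rcases lt_or_gt_of_ne hqb with h' | h'
  · -- ia < iq < ib : use triple (ia, iq, ib)
    have h1 : 0 < ε * sig (p ia) (p iq) (p ib) := hmono ia ha iq hq ib hb h h'
    have e : sig (p ia) (p iq) (p ib) = -sig (p ia) (p ib) (p iq) := by
      simp only [sig]; ring
    rw [e, eab] at h1
    nlinarith [mul_nonneg h0c hD.le]
  rcases lt_or_gt_of_ne hqc with h'' | h''
  · -- ib < iq < ic : use triple (ib, iq, ic)
    have h1 : 0 < ε * sig (p ib) (p iq) (p ic) := hmono ib hb iq hq ic hc h' h''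
    have e : sig (p ib) (p iq) (p ic) = -sig (p ib) (p ic) (p iq) := by
      simp only [sig]; ring
    rw [e, ebc] at h1
    have hwa' : 0 ≤ 1 - wb - wc := by linarith
    nlinarith [mul_nonneg hwa' hD.le]
  · -- ic < iq : use triple (ia, ic, iq)
    have h1 : 0 < ε * sig (p ia) (p ic) (p iq) := hmono ia ha ic hc iq hq (by omega) h''
    rw [eac] at h1
    nlinarith [mul_nonneg h0b hD.le]

lemma sig_ne_zero (p : ℕ → ℝ × ℝ) (T : Finset ℕ) (ε : ℝ)
    (hmono : ∀ i ∈ T, ∀ j ∈ T, ∀ k ∈ T, i < j → j < k → 0 < ε * sig (p i) (p j) (p k))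
    {i j l : ℕ} (hi : i ∈ T) (hj : j ∈ T) (hl : l ∈ T)
    (hij : i ≠ j) (hil : i ≠ l) (hjl : j ≠ l) :
    sig (p i) (p j) (p l) ≠ 0 := by
  intro h0
  rcases lt_trichotomy i j with h1 | h1 | h1
  · rcases lt_trichotomy j l with h2 | h2 | h2
    · have h := hmono i hi j hj l hl h1 h2
      rw [h0] at h; simp at h
    · exact hjl h2
    · rcases lt_trichotomy i l with h3 | h3 | h3
      · have h := hmono i hi l hl j hj h3 h2
        have e : sig (p i) (p l) (p j) = 0 := by
          simp only [sig] at h0 ⊢; linarith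
        rw [e] at h; simp at h
      · exact hil h3
      · have h := hmono l hl i hi j hj h3 h1
        have e : sig (p l) (p i) (p j) = 0 := by
          simp only [sig] at h0 ⊢; linarith
        rw [e] at h; simp at h
  · exact hij h1
  · rcases lt_trichotomy i l with h2 | h2 | h2
    · have h := hmono j hj i hi l hl h1 h2
      have e : sig (p j) (p i) (p l) = 0 := by
        simp only [sig] at h0 ⊢; linarith
      rw [e] at h; simp at h
    · exact hil h2
    · rcases lt_trichotomy j l with h3 | h3 | h3
      · have h := hmono j hj l hl i hi h3 h2
        have e : sig (p j) (p l) (p i) = 0 := by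
          simp only [sig] at h0 ⊢; linarith
        rw [e] at h; simp at h
      · exact hjl h3
      · have h := hmono l hl j hj i hi h3 h1
        have e : sig (p l) (p j) (p i) = 0 := by
          simp only [sig] at h0 ⊢; linarith
        rw [e] at h; simp at h

lemma convex_pos (p : ℕ → ℝ × ℝ) (T : Finset ℕ) (ε : ℝ)
    (hmono : ∀ i ∈ T, ∀ j ∈ T, ∀ k ∈ T, i < j → j < k → 0 < ε * sig (p i) (p j) (p k)) :
    ∀ q ∈ T.image p, q ∉ convexHull ℝ (↑((T.image p).erase q) : Set (ℝ × ℝ)) := by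
  intro q hqQ hcon
  obtain ⟨iq, hiqT, rfl⟩ := Finset.mem_image.mp hqQ
  rw [convexHull_eq_union] at hcon
  simp only [Set.mem_iUnion, exists_prop] at hcon
  obtain ⟨F, hFsub, hFai, hqF⟩ := hcon
  have hcard : F.card ≤ 3 := by
    have h1 := hFai.card_le_finrank_succ
    have h2 : Module.finrank ℝ (vectorSpan ℝ (Set.range ((↑) : F → ℝ × ℝ))) ≤
        Module.finrank ℝ (ℝ × ℝ) := Submodule.finrank_le _
    have h3 : Module.finrank ℝ (ℝ × ℝ) = 2 := by
      simp [Module.finrank_prod]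
    rw [Fintype.card_coe] at h1
    omega
  -- a helper to pass from membership in F to data
  have hmem : ∀ x ∈ F, ∃ ix ∈ T, p ix = x ∧ x ≠ p iq := by
    intro x hx
    have hx' : x ∈ (T.image p).erase (p iq) := hFsub hx
    obtain ⟨hxne, hxQ⟩ := Finset.mem_erase.mp hx'
    obtain ⟨ix, hixT, rfl⟩ := Finset.mem_image.mp hxQ
    exact ⟨ix, hixT, rfl, hxne⟩
  interval_cases hFc : F.card
  · rw [Finset.card_eq_zero.mp hFc] at hqF
    simp at hqF
  · obtain ⟨x, rfl⟩ := Finset.card_eq_one.mp hFc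
    simp only [Finset.coe_singleton, convexHull_singleton, Set.mem_singleton_iff] at hqF
    obtain ⟨ix, hixT, hpx, hne⟩ := hmem x (Finset.mem_singleton_self x)
    exact hne hqF.symm
  · -- |F| = 2
    obtain ⟨x, y, hxy, rfl⟩ := Finset.card_eq_two.mp hFc
    have hco : (↑({x, y} : Finset (ℝ × ℝ)) : Set (ℝ × ℝ)) = {x, y} := by simp
    rw [hco, convexHull_pair] at hqF
    obtain ⟨a, b, ha0, hb0, hab1, hq⟩ := hqF
    obtain ⟨ix, hixT, hpx, hnex⟩ := hmem x (by simp)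
    obtain ⟨iy, hiyT, hpy, hney⟩ := hmem y (by simp)
    have hxyi : ix ≠ iy := by intro h; exact hxy (by rw [← hpx, ← hpy, h])
    have hqx : iq ≠ ix := by intro h; exact hnex (by rw [← hpx, ← h])
    have hqy : iq ≠ iy := by intro h; exact hney (by rw [← hpy, ← h])
    apply sig_ne_zero p T ε hmono hixT hiyT hiqT hxyi (Ne.symm hqx) (Ne.symm hqy)
    have e1 : (p iq).1 = a * x.1 + b * y.1 := by
      rw [← hq]; simp [Prod.fst_add, Prod.smul_fst]
    have e2 : (p iq).2 = a * x.2 + b * y.2 := by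
      rw [← hq]; simp [Prod.snd_add, Prod.smul_snd]
    rw [hpx, hpy]
    simp only [sig]
    rw [e1, e2, show a = 1 - b by linarith]
    ring
  · -- |F| = 3
    obtain ⟨x, y, z, hxy, hxz, hyz, rfl⟩ := Finset.card_eq_three.mp hFc
    rw [Finset.convexHull_eq] at hqF
    obtain ⟨w, hw0, hwsum, hcm⟩ := hqF
    rw [Finset.centerMass_eq_of_sum_1 _ _ hwsum] at hcm
    have hnmx : x ∉ ({y, z} : Finset (ℝ × ℝ)) := by simp [hxy, hxz]
    have hnmy : y ∉ ({z} : Finset (ℝ × ℝ)) := by simp [hyz]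
    rw [Finset.sum_insert hnmx, Finset.sum_insert hnmy, Finset.sum_singleton] at hwsum hcm
    obtain ⟨ix, hixT, hpx, hnex⟩ := hmem x (by simp)
    obtain ⟨iy, hiyT, hpy, hney⟩ := hmem y (by simp)
    obtain ⟨iz, hizT, hpz, hnez⟩ := hmem z (by simp)
    have hxyi : ix ≠ iy := by intro h; exact hxy (by rw [← hpx, ← hpy, h])
    have hxzi : ix ≠ iz := by intro h; exact hxz (by rw [← hpx, ← hpz, h])
    have hyzi : iy ≠ iz := by intro h; exact hyz (by rw [← hpy, ← hpz, h])
    have hqx : iq ≠ ix := by intro h; exact hnex (by rw [← hpx, ← h])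
    have hqy : iq ≠ iy := by intro h; exact hney (by rw [← hpy, ← h])
    have hqz : iq ≠ iz := by intro h; exact hnez (by rw [← hpz, ← h])
    have h0x : (0:ℝ) ≤ w x := hw0 x (by simp)
    have h0y : (0:ℝ) ≤ w y := hw0 y (by simp)
    have h0z : (0:ℝ) ≤ w z := hw0 z (by simp)
    have e1 : (p iq).1 = w x * (p ix).1 + w y * (p iy).1 + w z * (p iz).1 := by
      rw [hpx, hpy, hpz, ← hcm]
      simp [Prod.fst_add, Prod.smul_fst]; ring
    have e2 : (p iq).2 = w x * (p ix).2 + w y * (p iy).2 + w z * (p iz).2 := by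
      rw [hpx, hpy, hpz, ← hcm]
      simp [Prod.snd_add, Prod.smul_snd]; ring
    rcases lt_trichotomy ix iy with h1 | h1 | h1
    · rcases lt_trichotomy iy iz with h2 | h2 | h2
      · exact core p T ε hmono ix iy iz iq hixT hiyT hizT hiqT h1 h2 hqx hqy hqz
          (w x) (w y) (w z) h0x h0y h0z (by linarith) (by linarith) (by linarith)
      · exact absurd h2 hyzi
      · rcases lt_trichotomy ix iz with h3 | h3 | h3
        · exact core p T ε hmono ix iz iy iq hixT hizT hiyT hiqT h3 h2 hqx hqz hqy
            (w x) (w z) (w y) h0x h0z h0y (by linarith) (by linarith) (by linarith)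
        · exact absurd h3 hxzi
        · exact core p T ε hmono iz ix iy iq hizT hixT hiyT hiqT h3 h1 hqz hqx hqy
            (w z) (w x) (w y) h0z h0x h0y (by linarith) (by linarith) (by linarith)
    · exact absurd h1 hxyi
    · rcases lt_trichotomy ix iz with h2 | h2 | h2
      · exact core p T ε hmono iy ix iz iq hiyT hixT hizT hiqT h1 h2 hqy hqx hqz
          (w y) (w x) (w z) h0y h0x h0z (by linarith) (by linarith) (by linarith)
      · exact absurd h2 hxzi
      · rcases lt_trichotomy iy iz with h3 | h3 | h3
        · exact core p T ε hmono iy iz ix iq hiyT hizT hixT hiqT h3 h2 hqy hqz hqx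
            (w y) (w z) (w x) h0y h0z h0x (by linarith) (by linarith) (by linarith)
        · exact absurd h3 hyzi
        · exact core p T ε hmono iz iy ix iq hizT hiyT hixT hiqT h3 h1 hqz hqy hqx
            (w z) (w y) (w x) h0z h0y h0x (by linarith) (by linarith) (by linarith)

/-- Erdős–Szekeres theorem: for every `k ≥ 3` there exists `N` such that any set of at
least `N` points in the plane with no three collinear contains `k` points in convex
position (each of them a vertex of their convex hull). -/
theorem erdos_szekeres_convex_position (k : ℕ) (hk : 3 ≤ k) :
    ∃ N : ℕ, ∀ P : Finset (ℝ × ℝ), N ≤ P.card →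
      (∀ a b c : ℝ × ℝ, a ∈ P → b ∈ P → c ∈ P → a ≠ b → a ≠ c → b ≠ c →
        ¬ Collinear ℝ ({a, b, c} : Set (ℝ × ℝ))) →
      ∃ Q ⊆ P, Q.card = k ∧
        ∀ p ∈ Q, p ∉ convexHull ℝ (↑(Q.erase p) : Set (ℝ × ℝ)) := by
  obtain ⟨N, hN⟩ := ramsey_triples k k
  refine ⟨N, fun P hP hGP => ?_⟩
  -- enumerate the points of P
  set n := P.card with hn
  set e := P.equivFin.symm with he
  set p : ℕ → ℝ × ℝ := fun m => if h : m < n then (e ⟨m, h⟩ : ℝ × ℝ) else 0 with hp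
  have hpmem : ∀ m, m < n → p m ∈ P := by
    intro m hm
    simp only [hp, dif_pos hm]
    exact (e ⟨m, hm⟩).2
  have hpinj : ∀ a, a < n → ∀ b, b < n → p a = p b → a = b := by
    intro a ha b hb hab
    simp only [hp, dif_pos ha, dif_pos hb] at hab
    have := e.injective (Subtype.ext hab)
    simpa using congrArg Fin.val this
  -- the orientation colouring
  set c : ℕ → ℕ → ℕ → Bool := fun i j l => decide (0 < sig (p i) (p j) (p l)) with hc
  have hrange : N ≤ (Finset.range n).card := by simpa using hP
  have hsig_ne : ∀ i j l, i ∈ Finset.range n → j ∈ Finset.range n → l ∈ Finset.range n →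
      i < j → j < l → sig (p i) (p j) (p l) ≠ 0 := by
    intro i j l hi hj hl hij hjl h0
    simp only [Finset.mem_range] at hi hj hl
    have hij' : p i ≠ p j := fun h => by have := hpinj i hi j hj h; omega
    have hil' : p i ≠ p l := fun h => by have := hpinj i hi l hl h; omega
    have hjl' : p j ≠ p l := fun h => by have := hpinj j hj l hl h; omega
    exact hGP (p i) (p j) (p l) (hpmem i hi) (hpmem j hj) (hpmem l hl) hij' hil' hjl'
      (collinear_of_sig_eq_zero h0)
  -- apply Ramsey
  have hmono : ∃ T ⊆ Finset.range n, T.card = k ∧ ∃ ε : ℝ,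
      ∀ i ∈ T, ∀ j ∈ T, ∀ l ∈ T, i < j → j < l → 0 < ε * sig (p i) (p j) (p l) := by
    rcases hN c (Finset.range n) hrange with ⟨T, hTs, hTc, hT⟩ | ⟨T, hTs, hTc, hT⟩
    · refine ⟨T, hTs, hTc, 1, fun i hi j hj l hl hij hjl => ?_⟩
      have := hT i hi j hj l hl hij hjl
      simp only [hc, decide_eq_true_eq] at this
      linarith
    · refine ⟨T, hTs, hTc, -1, fun i hi j hj l hl hij hjl => ?_⟩
      have := hT i hi j hj l hl hij hjl
      simp only [hc, decide_eq_false_iff_not, not_lt] at this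
      have hne := hsig_ne i j l (hTs hi) (hTs hj) (hTs hl) hij hjl
      have : sig (p i) (p j) (p l) < 0 := lt_of_le_of_ne this hne
      linarith
  obtain ⟨T, hTs, hTc, ε, hmono⟩ := hmono
  refine ⟨T.image p, ?_, ?_, ?_⟩
  · intro x hx
    obtain ⟨i, hiT, rfl⟩ := Finset.mem_image.mp hx
    exact hpmem i (Finset.mem_range.mp (hTs hiT))
  · rw [Finset.card_image_of_injOn, hTc]
    intro a ha b hb hab
    exact hpinj a (Finset.mem_range.mp (hTs ha)) b (Finset.mem_range.mp (hTs hb)) hab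
  · exact convex_pos p T ε hmono
end
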